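/- Let S be an n×n real positive semidefinite matrix written in block form S = [[A, B], [Bᵀ, C]] with A an m×m block, and let Ŝ = [[A],[Bᵀ]] A† [A, B] be its Nyström approximation. If rank(S) = rank(A), then the Nyström approximation is exact: S = Ŝ. -/

import Mathlib

open Matrix

/-- `Ad` is the Moore–Penrose inverse of `A`: the Penrose equations
`A Ad A = A`, `Ad A Ad = Ad`, `(A Ad)ᵀ = A Ad`, `(Ad A)ᵀ = Ad A`. -/
def IsMoorePenroseInv {m n : ℕ} (A : Matrix (Fin m) (Fin n) ℝ)
    (Ad : Matrix (Fin n) (Fin m) ℝ) : Prop :=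
  A * Ad * A = A ∧ Ad * A * Ad = Ad ∧ (A * Ad)ᵀ = A * Ad ∧ (Ad * A)ᵀ = Ad * A

/-- The Moore–Penrose inverse of a symmetric matrix is symmetric. -/
lemma mp_transpose_eq {m : ℕ} {A Ad : Matrix (Fin m) (Fin m) ℝ} (hA : Aᵀ = A)
    (h : IsMoorePenroseInv A Ad) : Adᵀ = Ad := by
  obtain ⟨h1, h2, h3, h4⟩ := h
  have hX1 : A * Adᵀ * A = A := by
    have := congrArg Matrix.transpose h1
    simpa only [transpose_mul, hA, Matrix.mul_assoc] using this
  have hX2 : Adᵀ * A * Adᵀ = Adᵀ := by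
    have := congrArg Matrix.transpose h2
    simpa only [transpose_mul, hA, Matrix.mul_assoc] using this
  have hX3 : A * Adᵀ = Ad * A := by
    simpa only [transpose_mul, hA] using h4
  have hX4 : Adᵀ * A = A * Ad := by
    simpa only [transpose_mul, hA] using h3
  have key1 : A * Adᵀ = A * Ad := by
    calc A * Adᵀ = Ad * A := hX3
      _ = Ad * (A * Adᵀ * A) := by rw [hX1]
      _ = (Ad * A) * (Adᵀ * A) := by simp only [Matrix.mul_assoc]
      _ = (A * Adᵀ) * (A * Ad) := by rw [hX3, hX4]
      _ = (A * Adᵀ * A) * Ad := by simp only [Matrix.mul_assoc]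
      _ = A * Ad := by rw [hX1]
  have key2 : Adᵀ * A = Ad * A := by
    calc Adᵀ * A = A * Ad := hX4
      _ = (A * Adᵀ * A) * Ad := by rw [hX1]
      _ = (A * Adᵀ) * (A * Ad) := by simp only [Matrix.mul_assoc]
      _ = (Ad * A) * (Adᵀ * A) := by rw [hX3, hX4]
      _ = Ad * (A * Adᵀ * A) := by simp only [Matrix.mul_assoc]
      _ = Ad * A := by rw [hX1]
  calc Adᵀ = Adᵀ * A * Adᵀ := hX2.symm
    _ = Ad * A * Adᵀ := by rw [key2]
    _ = Ad * (A * Adᵀ) := by rw [Matrix.mul_assoc]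
    _ = Ad * (A * Ad) := by rw [key1]
    _ = Ad := by rw [← Matrix.mul_assoc, h2]

/-- If `S = [[A, B], [Bᵀ, C]]` is positive semidefinite and
`rank S = rank A`, then the Nyström approximation is exact:
`S = [[A],[Bᵀ]] A† [A, B]`. -/
theorem nystrom_approximation_exact_of_rank_eq {m p : ℕ}
    (A Ad : Matrix (Fin m) (Fin m) ℝ)
    (B : Matrix (Fin m) (Fin p) ℝ) (C : Matrix (Fin p) (Fin p) ℝ)
    (hS : (Matrix.fromBlocks A B Bᵀ C).PosSemidef)
    (hMP : IsMoorePenroseInv A Ad)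
    (hrank : (Matrix.fromBlocks A B Bᵀ C).rank = A.rank) :
    Matrix.fromBlocks A B Bᵀ C =
      Matrix.fromBlocks (A * Ad * A) (A * Ad * B) (Bᵀ * Ad * A) (Bᵀ * Ad * B) := by
  obtain ⟨h1, h2, h3, h4⟩ := hMP
  -- symmetry of `A` and `C`
  have hSsym : (Matrix.fromBlocks A B Bᵀ C)ᵀ = Matrix.fromBlocks A B Bᵀ C := by
    have := hS.1
    rwa [Matrix.IsHermitian, conjTranspose_eq_transpose_of_trivial] at this
  rw [fromBlocks_transpose, fromBlocks_inj] at hSsym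
  obtain ⟨hA, _, _, hC⟩ := hSsym
  have hAd : Adᵀ = Ad := mp_transpose_eq hA ⟨h1, h2, h3, h4⟩
  -- kernel of `A` is contained in kernel of `Bᵀ`
  have hker0 : ∀ x : Fin m → ℝ, A *ᵥ x = 0 → Bᵀ *ᵥ x = 0 := by
    intro x hx
    set y : Fin m ⊕ Fin p → ℝ := Sum.elim x 0 with hy
    have hyS : (Matrix.fromBlocks A B Bᵀ C) *ᵥ y =
        Sum.elim (A *ᵥ x + B *ᵥ 0) (Bᵀ *ᵥ x + C *ᵥ 0) := by
      rw [fromBlocks_mulVec]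
      simp [hy]
    have hdot : star y ⬝ᵥ (Matrix.fromBlocks A B Bᵀ C) *ᵥ y = 0 := by
      rw [hyS, hx]
      simp [hy, sumElim_dotProduct_sumElim]
    have h0 := (hS.dotProduct_mulVec_zero_iff y).mp hdot
    rw [hyS, hx] at h0
    have := congrFun h0
    funext i
    simpa using this (Sum.inr i)
  -- `Bᵀ * Ad * A = Bᵀ` and `A * Ad * B = B`
  have hAQ : A * (1 - Ad * A) = 0 := by
    rw [Matrix.mul_sub, Matrix.mul_one, ← Matrix.mul_assoc, h1, sub_self]
  have hBQ : Bᵀ * (1 - Ad * A) = 0 := by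
    ext i j
    have h0 : A *ᵥ (fun k => (1 - Ad * A) k j) = 0 := by
      funext i'
      have : (A * (1 - Ad * A)) i' j = (0 : Matrix (Fin m) (Fin m) ℝ) i' j := by rw [hAQ]
      simpa [Matrix.mul_apply, Matrix.mulVec, dotProduct] using this
    have := congrFun (hker0 _ h0) i
    simpa [Matrix.mul_apply, Matrix.mulVec, dotProduct] using this
  have hBtAdA : Bᵀ * Ad * A = Bᵀ := by
    rw [Matrix.mul_sub, Matrix.mul_one, sub_eq_zero] at hBQ
    rw [Matrix.mul_assoc, ← hBQ]
  have hAAdB : A * Ad * B = B := by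
    have := congrArg Matrix.transpose hBtAdA
    simpa only [transpose_mul, transpose_transpose, hA, hAd, Matrix.mul_assoc] using this
  -- abbreviations
  set W : Matrix (Fin p) (Fin p) ℝ := Bᵀ * Ad * B with hW
  set M : Matrix (Fin p) (Fin p) ℝ := C - W with hM
  set N : Matrix (Fin m ⊕ Fin p) (Fin m ⊕ Fin p) ℝ := Matrix.fromBlocks A B Bᵀ W with hN
  set Z : Matrix (Fin m ⊕ Fin p) (Fin m ⊕ Fin p) ℝ := Matrix.fromBlocks 0 0 0 M with hZ
  have hSNZ : Matrix.fromBlocks A B Bᵀ C = N + Z := by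
    rw [hN, hZ, fromBlocks_add]
    rw [hM, add_zero, add_zero, add_zero, add_sub_cancel]
  -- `A` and `Ad` are PSD
  have hsub : (Matrix.fromBlocks A B Bᵀ C).submatrix Sum.inl Sum.inl = A := by
    ext i j; rfl
  have hApsd : A.PosSemidef := hsub ▸ hS.submatrix Sum.inl
  have hAdpsd : Ad.PosSemidef := by
    have hkey : Adᴴ * A * Ad = Ad := by
      rw [conjTranspose_eq_transpose_of_trivial, hAd, h2]
    exact hkey ▸ hApsd.conjTranspose_mul_mul_same Ad
  -- `N` is PSD
  have hAh : Aᴴ = A := by rw [conjTranspose_eq_transpose_of_trivial, hA]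
  have hBh : Bᴴ = Bᵀ := conjTranspose_eq_transpose_of_trivial _
  have hXN : (fromCols A B)ᴴ * Ad * fromCols A B = N := by
    rw [conjTranspose_fromCols_eq_fromRows_conjTranspose, hAh, hBh,
      fromRows_mul, fromRows_mul, mul_fromCols, mul_fromCols,
      fromRows_fromCols_eq_fromBlocks, h1, hAAdB, hBtAdA, hN, ← hW]
  have hNpsd : N.PosSemidef := hXN ▸ hAdpsd.conjTranspose_mul_mul_same (fromCols A B)
  -- mulVec computations
  have hZmul : ∀ x : Fin m ⊕ Fin p → ℝ, Z *ᵥ x = Sum.elim (0 : Fin m → ℝ) (M *ᵥ (x ∘ Sum.inr)) := by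
    intro x
    rw [hZ, fromBlocks_mulVec]
    simp
  have hNu : ∀ w : Fin p → ℝ, N *ᵥ (Sum.elim (-((Ad * B) *ᵥ w)) w) = 0 := by
    intro w
    have e1 : A *ᵥ (-((Ad * B) *ᵥ w)) + B *ᵥ w = 0 := by
      rw [Matrix.mulVec_neg, Matrix.mulVec_mulVec, ← Matrix.mul_assoc, hAAdB, neg_add_cancel]
    have e2 : Bᵀ *ᵥ (-((Ad * B) *ᵥ w)) + W *ᵥ w = 0 := by
      rw [Matrix.mulVec_neg, Matrix.mulVec_mulVec, ← Matrix.mul_assoc, ← hW, neg_add_cancel]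
    rw [hN, fromBlocks_mulVec, Sum.elim_comp_inl, Sum.elim_comp_inr, e1, e2]
    funext i; cases i <;> rfl
  -- the quadratic form of `Z` is nonnegative
  have hZquad : ∀ x : Fin m ⊕ Fin p → ℝ, 0 ≤ x ⬝ᵥ Z *ᵥ x := by
    intro x
    set w : Fin p → ℝ := x ∘ Sum.inr with hw
    set u : Fin m ⊕ Fin p → ℝ := Sum.elim (-((Ad * B) *ᵥ w)) w with hu
    have hSu : (Matrix.fromBlocks A B Bᵀ C) *ᵥ u = Sum.elim (0 : Fin m → ℝ) (M *ᵥ w) := by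
      rw [hSNZ, add_mulVec, hNu w, zero_add, hZmul u, hu, Sum.elim_comp_inr]
    have h0 := hS.dotProduct_mulVec_nonneg u
    rw [show star u = u by simp, hSu] at h0
    have hud : u ⬝ᵥ Sum.elim (0 : Fin m → ℝ) (M *ᵥ w) = w ⬝ᵥ (M *ᵥ w) := by
      rw [hu, sumElim_dotProduct_sumElim, dotProduct_zero, zero_add]
    have hxd : x ⬝ᵥ Z *ᵥ x = w ⬝ᵥ (M *ᵥ w) := by
      rw [hZmul x, ← hw]
      conv_lhs => rw [← Sum.elim_comp_inl_inr x]
      rw [sumElim_dotProduct_sumElim, dotProduct_zero, zero_add, ← hw]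
    rw [hxd]
    rw [hud] at h0
    exact h0
  -- kernel inclusion and rank comparison
  have hkerle : LinearMap.ker (Matrix.fromBlocks A B Bᵀ C).mulVecLin ≤
      LinearMap.ker N.mulVecLin := by
    intro v hv
    rw [LinearMap.mem_ker, mulVecLin_apply] at hv ⊢
    have hsum : v ⬝ᵥ N *ᵥ v + v ⬝ᵥ Z *ᵥ v = 0 := by
      rw [← dotProduct_add, ← add_mulVec, ← hSNZ, hv, dotProduct_zero]
    have hNq : 0 ≤ v ⬝ᵥ N *ᵥ v := by simpa using hNpsd.dotProduct_mulVec_nonneg v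
    have hNz : v ⬝ᵥ N *ᵥ v = 0 := by linarith [hZquad v]
    exact (hNpsd.dotProduct_mulVec_zero_iff v).mp (by simpa using hNz)
  have hrA_le_rN : A.rank ≤ N.rank := by
    have hNA : fromCols (1 : Matrix (Fin m) (Fin m) ℝ) (0 : Matrix (Fin m) (Fin p) ℝ) * N * fromRows (1 : Matrix (Fin m) (Fin m) ℝ) (0 : Matrix (Fin p) (Fin m) ℝ) = A := by
      rw [hN, fromCols_mul_fromBlocks, Matrix.one_mul, Matrix.one_mul,
        Matrix.zero_mul, Matrix.zero_mul, add_zero, add_zero,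
        fromCols_mul_fromRows, Matrix.mul_one, Matrix.mul_zero, add_zero]
    calc A.rank = (fromCols (1 : Matrix (Fin m) (Fin m) ℝ) (0 : Matrix (Fin m) (Fin p) ℝ) * N * fromRows (1 : Matrix (Fin m) (Fin m) ℝ) (0 : Matrix (Fin p) (Fin m) ℝ)).rank := by rw [hNA]
      _ ≤ (fromCols (1 : Matrix (Fin m) (Fin m) ℝ) (0 : Matrix (Fin m) (Fin p) ℝ) * N).rank := rank_mul_le_left _ _
      _ ≤ N.rank := rank_mul_le_right _ _
  have hrk1 := LinearMap.finrank_range_add_finrank_ker (Matrix.fromBlocks A B Bᵀ C).mulVecLin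
  have hrk2 := LinearMap.finrank_range_add_finrank_ker N.mulVecLin
  have hmono := Submodule.finrank_mono hkerle
  have hd1 : (Matrix.fromBlocks A B Bᵀ C).rank =
      Module.finrank ℝ (LinearMap.range (Matrix.fromBlocks A B Bᵀ C).mulVecLin) := rfl
  have hd2 : N.rank = Module.finrank ℝ (LinearMap.range N.mulVecLin) := rfl
  have hkereq : LinearMap.ker (Matrix.fromBlocks A B Bᵀ C).mulVecLin =
      LinearMap.ker N.mulVecLin := by
    apply Submodule.eq_of_le_of_finrank_le hkerle
    omega
  -- conclude `M = 0`
  have hM0 : M = 0 := by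
    ext i j
    have hu := hNu (Pi.single j 1)
    have humem : Sum.elim (-((Ad * B) *ᵥ Pi.single j 1)) (Pi.single j 1) ∈
        LinearMap.ker N.mulVecLin := by
      rw [LinearMap.mem_ker, mulVecLin_apply]; exact hu
    rw [← hkereq, LinearMap.mem_ker, mulVecLin_apply] at humem
    have hZu : Z *ᵥ (Sum.elim (-((Ad * B) *ᵥ Pi.single j 1)) (Pi.single j 1)) = 0 := by
      have h' := humem
      rw [hSNZ, add_mulVec, hu, zero_add] at h'
      exact h'
    have h'' := hZmul (Sum.elim (-((Ad * B) *ᵥ Pi.single j 1)) (Pi.single j 1))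
    rw [hZu, Sum.elim_comp_inr] at h''
    have hMw : M *ᵥ (Pi.single j 1 : Fin p → ℝ) = 0 := by
      have := congrFun h''
      funext i'
      simpa using (this (Sum.inr i')).symm
    have := congrFun hMw i
    simpa using this
  have hCW : C = W := by
    have : C - W = 0 := hM ▸ hM0
    exact sub_eq_zero.mp this
  rw [h1, hAAdB, hBtAdA, hCW]
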